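/- For every real u ≥ 1, letting n₀ = ⌈e·u⌉, the Poisson-type tail satisfies Σ_{k=n₀+1}^∞ u^k/k! ≤ √(e·u)/((e−1)·√(2π)). -/

import Mathlib

open Real

lemma sqrt_pi_le_stirlingSeq (n : ℕ) (hn : 1 ≤ n) : Real.sqrt π ≤ Stirling.stirlingSeq n := by
  obtain ⟨m, rfl⟩ := Nat.exists_eq_add_of_le hn
  have h1 : Filter.Tendsto (Stirling.stirlingSeq ∘ Nat.succ) Filter.atTop (nhds (Real.sqrt π)) :=
    Stirling.tendsto_stirlingSeq_sqrt_pi.comp (Filter.tendsto_add_atTop_nat 1)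
  have := Stirling.stirlingSeq'_antitone.le_of_tendsto h1 m
  simpa [Nat.succ_eq_add_one, Nat.add_comm] using this

lemma stirling_lb (n : ℕ) (hn : 1 ≤ n) :
    Real.sqrt π * (Real.sqrt (2 * n) * ((n : ℝ) / Real.exp 1) ^ n) ≤ (Nat.factorial n : ℝ) := by
  have hd : 0 < Real.sqrt (2 * n) * ((n : ℝ) / Real.exp 1) ^ n := by
    have : (0:ℝ) < n := by exact_mod_cast hn
    positivity
  have h := sqrt_pi_le_stirlingSeq n hn
  rw [Stirling.stirlingSeq, le_div_iff₀ hd] at h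
  linarith [h]

lemma key_head (u : ℝ) (hu : 1 ≤ u) :
    u ^ (Nat.ceil (Real.exp 1 * u)) / Nat.factorial (Nat.ceil (Real.exp 1 * u)) ≤
      1 / Real.sqrt (2 * π) := by
  set n := Nat.ceil (Real.exp 1 * u) with hn
  have hu0 : 0 < u := lt_of_lt_of_le one_pos hu
  have heu : Real.exp 1 * u ≤ n := Nat.le_ceil _
  have he1 : (2:ℝ) ≤ Real.exp 1 := by linarith [Real.add_one_le_exp (1:ℝ)]
  have hn1 : 1 ≤ n := Nat.one_le_ceil_iff.mpr (by nlinarith)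
  have hnr : (1:ℝ) ≤ n := by exact_mod_cast hn1
  have hun : u ≤ (n : ℝ) / Real.exp 1 := by
    rw [le_div_iff₀ (Real.exp_pos 1)]; linarith [heu]
  have hpow : u ^ n ≤ ((n : ℝ) / Real.exp 1) ^ n :=
    pow_le_pow_left₀ (le_of_lt hu0) hun n
  have hfac := stirling_lb n hn1
  have hppos : (0:ℝ) < ((n : ℝ) / Real.exp 1) ^ n := by positivity
  have hdpos : (0:ℝ) < Real.sqrt π * (Real.sqrt (2 * n) * ((n : ℝ) / Real.exp 1) ^ n) := by
    have := Real.pi_pos; positivity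
  have hs2 : Real.sqrt (2 * π) ≤ Real.sqrt π * Real.sqrt (2 * n) := by
    rw [← Real.sqrt_mul (le_of_lt Real.pi_pos)]
    apply Real.sqrt_le_sqrt
    nlinarith [Real.pi_pos]
  calc u ^ n / Nat.factorial n
      ≤ ((n : ℝ) / Real.exp 1) ^ n /
          (Real.sqrt π * (Real.sqrt (2 * n) * ((n : ℝ) / Real.exp 1) ^ n)) := by
        apply div_le_div₀ (le_of_lt hppos) hpow hdpos hfac
    _ = 1 / (Real.sqrt π * Real.sqrt (2 * n)) := by
        field_simp
    _ ≤ 1 / Real.sqrt (2 * π) := by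
        apply one_div_le_one_div_of_le (Real.sqrt_pos.mpr (by linarith [Real.pi_pos])) hs2

lemma key_term (u : ℝ) (hu : 1 ≤ u) (m : ℕ) :
    u ^ (m + Nat.ceil (Real.exp 1 * u) + 1) /
        Nat.factorial (m + Nat.ceil (Real.exp 1 * u) + 1) ≤
      (1 / Real.sqrt (2 * π)) * (Real.exp 1)⁻¹ ^ (m + 1) := by
  set n := Nat.ceil (Real.exp 1 * u) with hn
  have hu0 : 0 < u := lt_of_lt_of_le one_pos hu
  have heu : Real.exp 1 * u ≤ n := Nat.le_ceil _
  have hstep : ∀ k : ℕ, n + 1 ≤ k → u / k ≤ (Real.exp 1)⁻¹ := by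
    intro k hk
    have hkr : (n:ℝ) + 1 ≤ k := by exact_mod_cast hk
    have hkpos : (0:ℝ) < k := by exact_mod_cast lt_of_lt_of_le (Nat.succ_pos n) hk
    rw [div_le_iff₀ hkpos, inv_mul_eq_div, le_div_iff₀ (Real.exp_pos 1)]
    nlinarith [Real.exp_pos 1]
  induction m with
  | zero =>
      have h1 : u ^ (n + 1) / Nat.factorial (n + 1) =
          (u ^ n / Nat.factorial n) * (u / (n + 1)) := by
        rw [Nat.factorial_succ, pow_succ]
        push_cast
        field_simp
      have h2 := key_head u hu
      have h3 : u / ((n:ℝ) + 1) ≤ (Real.exp 1)⁻¹ := by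
        have := hstep (n + 1) le_rfl
        push_cast at this ⊢
        exact this
      calc u ^ (0 + n + 1) / Nat.factorial (0 + n + 1)
          = (u ^ n / Nat.factorial n) * (u / (n + 1)) := by rw [Nat.zero_add]; exact h1
        _ ≤ (1 / Real.sqrt (2 * π)) * (Real.exp 1)⁻¹ := by
            apply mul_le_mul h2 h3 (div_nonneg hu0.le (by positivity)) (by positivity)
        _ = (1 / Real.sqrt (2 * π)) * (Real.exp 1)⁻¹ ^ (0 + 1) := by ring
  | succ m ih =>
      have h1 : u ^ (m + 1 + n + 1) / Nat.factorial (m + 1 + n + 1) =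
          (u ^ (m + n + 1) / Nat.factorial (m + n + 1)) * (u / (m + n + 2)) := by
        have e1 : m + 1 + n + 1 = (m + n + 1) + 1 := by omega
        rw [e1, Nat.factorial_succ, pow_succ]
        push_cast
        field_simp
        ring
      have h3 : u / ((m:ℝ) + n + 2) ≤ (Real.exp 1)⁻¹ := by
        have := hstep (m + n + 2) (by omega)
        push_cast at this ⊢
        linarith [this]
      calc u ^ (m + 1 + n + 1) / Nat.factorial (m + 1 + n + 1)
          = (u ^ (m + n + 1) / Nat.factorial (m + n + 1)) * (u / (m + n + 2)) := h1
        _ ≤ ((1 / Real.sqrt (2 * π)) * (Real.exp 1)⁻¹ ^ (m + 1)) * (Real.exp 1)⁻¹ := by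
            apply mul_le_mul ih h3 (div_nonneg hu0.le (by positivity)) (by positivity)
        _ = (1 / Real.sqrt (2 * π)) * (Real.exp 1)⁻¹ ^ (m + 1 + 1) := by ring

/-- For every real `u ≥ 1`, with `n₀ = ⌈e u⌉`, the Poisson-type
tail satisfies `Σ_{k = n₀+1}^∞ u^k/k! ≤ √(e u)/((e-1) √(2π))`. -/
theorem stmt_15 (u : ℝ) (hu : 1 ≤ u) :
    (∑' k : ℕ,
        u ^ (k + Nat.ceil (Real.exp 1 * u) + 1) /
          Nat.factorial (k + Nat.ceil (Real.exp 1 * u) + 1)) ≤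
      Real.sqrt (Real.exp 1 * u) / ((Real.exp 1 - 1) * Real.sqrt (2 * Real.pi)) := by
  set n := Nat.ceil (Real.exp 1 * u) with hn
  have he1 : (2:ℝ) ≤ Real.exp 1 := by linarith [Real.add_one_le_exp (1:ℝ)]
  have hr0 : (0:ℝ) ≤ (Real.exp 1)⁻¹ := by positivity
  have hr1 : (Real.exp 1)⁻¹ < 1 := inv_lt_one_of_one_lt₀ (by linarith)
  have hf : Summable (fun k : ℕ => u ^ (k + n + 1) / (Nat.factorial (k + n + 1) : ℝ)) := by
    have := (summable_nat_add_iff (f := fun k : ℕ => u ^ k / (Nat.factorial k : ℝ)) (n + 1)).mpr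
      (Real.summable_pow_div_factorial u)
    exact this
  have hg : Summable (fun m : ℕ => (1 / Real.sqrt (2 * π)) * (Real.exp 1)⁻¹ ^ (m + 1)) := by
    apply Summable.mul_left
    exact ((summable_geometric_of_lt_one hr0 hr1).mul_left ((Real.exp 1)⁻¹)).congr
      fun m => by rw [pow_succ]; ring
  have hle := Summable.tsum_le_tsum (fun m => key_term u hu m) hf hg
  refine hle.trans ?_
  have htg : (∑' m : ℕ, (1 / Real.sqrt (2 * π)) * (Real.exp 1)⁻¹ ^ (m + 1)) =
      (1 / Real.sqrt (2 * π)) * ((Real.exp 1)⁻¹ * (1 - (Real.exp 1)⁻¹)⁻¹) := by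
    rw [tsum_mul_left]
    congr 1
    have : (fun m : ℕ => (Real.exp 1)⁻¹ ^ (m + 1)) =
        fun m : ℕ => (Real.exp 1)⁻¹ * (Real.exp 1)⁻¹ ^ m := by
      funext m; rw [pow_succ]; ring
    rw [this, tsum_mul_left, tsum_geometric_of_lt_one hr0 hr1]
  rw [htg]
  have hex : (0:ℝ) < Real.exp 1 := Real.exp_pos 1
  have h2pi : (0:ℝ) < Real.sqrt (2 * π) := Real.sqrt_pos.mpr (by linarith [Real.pi_pos])
  have hsimp : (1 / Real.sqrt (2 * π)) * ((Real.exp 1)⁻¹ * (1 - (Real.exp 1)⁻¹)⁻¹) =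
      1 / ((Real.exp 1 - 1) * Real.sqrt (2 * π)) := by
    have hne : Real.exp 1 ≠ 0 := ne_of_gt hex
    have h1 : (1:ℝ) - (Real.exp 1)⁻¹ = (Real.exp 1 - 1) / Real.exp 1 := by
      field_simp
    rw [h1]
    field_simp
  rw [hsimp]
  have hsq : (1:ℝ) ≤ Real.sqrt (Real.exp 1 * u) := by
    calc (1:ℝ) = Real.sqrt 1 := Real.sqrt_one.symm
      _ ≤ Real.sqrt (Real.exp 1 * u) := Real.sqrt_le_sqrt (by nlinarith)
  have hd1 : (0:ℝ) < (Real.exp 1 - 1) * Real.sqrt (2 * π) := mul_pos (by linarith) h2pi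
  exact div_le_div₀ (Real.sqrt_nonneg _) hsq hd1 le_rfl
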